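/- The group (ℚ; +) trace defines the group (ℚ/ℤ; +): letting τ : ℚ/ℤ → ℚ be the injection sending each coset γ + ℤ to its unique representative in [0,1) ∩ ℚ, for every n ≥ 1 and every set X ⊆ (ℚ/ℤ)^n definable with parameters in the abelian group (ℚ/ℤ; +), there is a set Y ⊆ ℚ^n definable with parameters in the abelian group (ℚ; +) such that for all α₁,…,αₙ ∈ ℚ/ℤ: (α₁,…,αₙ) ∈ X if and only if (τ(α₁),…,τ(αₙ)) ∈ Y. -/

import Mathlib

open FirstOrder FirstOrder.Language

/-- The function symbols of the language of abelian groups: `0`, `-`, `+`. -/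
inductive abFunc : ℕ → Type
  | zero : abFunc 0
  | neg : abFunc 1
  | add : abFunc 2

/-- The first-order language of abelian groups `{+, -, 0}`. -/
def abLang : Language := ⟨abFunc, fun _ => Empty⟩

/-- Any additive group as a structure in the language of abelian groups. -/
instance (G : Type*) [AddGroup G] : abLang.Structure G where
  funMap := fun {n} f x =>
    match n, f, x with
    | 0, .zero, _ => 0
    | 1, .neg, x => -x 0
    | 2, .add, x => x 0 + x 1
  RelMap := fun {_} R _ => nomatch R

/-- The group `ℚ/ℤ`. -/
abbrev QModZ : Type := ℚ ⧸ AddSubgroup.zmultiples (1 : ℚ)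

namespace TraceProof

noncomputable section
open Classical Set

local notation "G" => QModZ

/-- canonical surjection -/
def π : ℚ →+ QModZ := QuotientAddGroup.mk' (AddSubgroup.zmultiples (1 : ℚ))

lemma π_surj : Function.Surjective π := QuotientAddGroup.mk'_surjective _

lemma π_int (k : ℤ) : π (k : ℚ) = 0 := by
  rw [π, QuotientAddGroup.mk'_apply, QuotientAddGroup.eq_zero_iff]
  exact ⟨k, by simp⟩

lemma π_eq_zero_iff (q : ℚ) : π q = 0 ↔ ∃ k : ℤ, (k : ℚ) = q := by
  constructor
  · intro h
    rw [π, QuotientAddGroup.mk'_apply, QuotientAddGroup.eq_zero_iff] at h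
    obtain ⟨k, hk⟩ := h
    exact ⟨k, by simpa using hk⟩
  · rintro ⟨k, rfl⟩; exact π_int k

/-- divisibility of ℚ/ℤ -/
lemma divisible (d : ℤ) (hd : d ≠ 0) (g : G) : ∃ y : G, d • y = g := by
  obtain ⟨r, rfl⟩ := π_surj g
  refine ⟨π (r / d), ?_⟩
  rw [← map_zsmul]
  congr 1
  rw [zsmul_eq_mul]
  field_simp [show (d:ℚ) ≠ 0 by exact_mod_cast hd]

/-- a canonical representative in [0,1) -/
def rep (y : G) : ℚ := Int.fract (Quotient.out y)

lemma rep_mem (y : G) : rep y ∈ Set.Ico (0 : ℚ) 1 :=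
  ⟨Int.fract_nonneg _, Int.fract_lt_one _⟩

lemma π_rep (y : G) : π (rep y) = y := by
  conv_rhs => rw [← Quotient.out_eq y]
  rw [rep, Int.fract]
  have : π ((Quotient.out y : ℚ) - ⌊(Quotient.out y : ℚ)⌋) = π (Quotient.out y) - π (⌊(Quotient.out y : ℚ)⌋ : ℚ) := by
    rw [map_sub]
  rw [this, π_int, sub_zero]
  rfl

lemma π_injOn_Ico {a b : ℚ} (ha : a ∈ Set.Ico (0:ℚ) 1) (hb : b ∈ Set.Ico (0:ℚ) 1)
    (h : π a = π b) : a = b := by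
  have : π (a - b) = 0 := by rw [map_sub, h, sub_self]
  obtain ⟨k, hk⟩ := (π_eq_zero_iff _).1 this
  have hlt : |(k:ℚ)| < 1 := by
    rw [hk, abs_lt]
    exact ⟨by linarith [ha.1, ha.2, hb.1, hb.2], by linarith [ha.1, ha.2, hb.1, hb.2]⟩
  have h2 : ((|k| : ℤ) : ℚ) < ((1:ℤ):ℚ) := by push_cast; exact hlt
  have hk0 : k = 0 := Int.abs_lt_one_iff.1 (by exact_mod_cast h2)
  rw [hk0] at hk
  simp at hk
  linarith [hk]

instance : Infinite G := by
  refine Infinite.of_injective (fun n : ℕ => π (1 / (n + 2))) ?_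
  intro a b hab
  have ha : (1:ℚ) / (a + 2) ∈ Set.Ico (0:ℚ) 1 := by
    constructor
    · positivity
    · rw [div_lt_one (by positivity)]
      have : (0:ℚ) ≤ a := by positivity
      linarith
  have hb : (1:ℚ) / (b + 2) ∈ Set.Ico (0:ℚ) 1 := by
    constructor
    · positivity
    · rw [div_lt_one (by positivity)]
      have : (0:ℚ) ≤ b := by positivity
      linarith
  have := π_injOn_Ico ha hb hab
  have hA : ((a:ℚ) + 2) ≠ 0 := by positivity
  have hB : ((b:ℚ) + 2) ≠ 0 := by positivity
  rw [div_eq_div_iff hA hB] at this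
  have : (a:ℚ) = b := by linarith
  exact_mod_cast this

/-- torsion sets are finite -/
lemma torsion_finite (d : ℤ) (hd : d ≠ 0) : {y : G | d • y = 0}.Finite := by
  have hsub : {y : G | d • y = 0} ⊆ (fun k : ℤ => π ((k : ℚ) / d)) '' (Set.Icc (-|d|) |d|) := by
    intro y hy
    have h1 : π (d • rep y) = 0 := by rw [map_zsmul, π_rep]; exact hy
    obtain ⟨k, hk⟩ := (π_eq_zero_iff _).1 h1
    have hrep := rep_mem y
    have hdq : ((d:ℚ)) ≠ 0 := Int.cast_ne_zero.2 hd
    have hr : rep y = (k : ℚ) / d := by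
      rw [zsmul_eq_mul] at hk
      field_simp
      linarith [hk]
    clear h1
    refine ⟨k, ?_, by simp only []; rw [← hr, π_rep]⟩
    have hkd : (k:ℚ) = d * rep y := by rw [hr]; field_simp
    have h1 : |(k:ℚ)| ≤ |(d:ℚ)| := by
      rw [hkd, abs_mul]
      have h01 : |rep y| ≤ 1 := by
        rw [abs_le]
        exact ⟨by linarith [hrep.1], by linarith [hrep.2]⟩
      nlinarith [abs_nonneg ((d:ℚ))]
    have h2 : ((|k| : ℤ) : ℚ) ≤ ((|d| : ℤ) : ℚ) := by push_cast; exact h1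
    have : |k| ≤ |d| := by exact_mod_cast h2
    rw [Set.mem_Icc]
    exact abs_le.1 this
  exact Set.Finite.subset ((Set.finite_Icc _ _).image _) hsub

lemma eqset_finite (m : ℤ) (hm : m ≠ 0) (t : G) : {y : G | m • y = t}.Finite := by
  rcases Set.eq_empty_or_nonempty {y : G | m • y = t} with h | ⟨y₀, hy₀⟩
  · rw [h]; exact Set.finite_empty
  · have : {y : G | m • y = t} ⊆ (y₀ + ·) '' {y : G | m • y = 0} := by
      intro y hy
      refine ⟨y - y₀, ?_, add_sub_cancel y₀ y⟩
      simp only [Set.mem_setOf_eq, smul_sub]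
      rw [hy.out, hy₀.out, sub_self]
    exact Set.Finite.subset ((torsion_finite m hm).image _) this

section IsBsec

variable {ι : Type} [Fintype ι]

/-- basic equation set -/
def eqSet (c : ι → ℤ) (γ : G) : Set (ι → G) := {x | ∑ i, c i • x i = γ}

/-- boolean combinations of equation sets -/
inductive IsB : Set (ι → G) → Prop
  | eq (c : ι → ℤ) (γ : G) : IsB (eqSet c γ)
  | compl {s} : IsB s → IsB sᶜ
  | inter {s t} : IsB s → IsB t → IsB (s ∩ t)

lemma IsB.congr {s t : Set (ι → G)} (h : IsB s) (e : s = t) : IsB t := e ▸ h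

lemma IsB.union {s t : Set (ι → G)} (hs : IsB s) (ht : IsB t) : IsB (s ∪ t) :=
  ((hs.compl.inter ht.compl).compl).congr (by rw [Set.compl_inter, compl_compl, compl_compl])

lemma isB_univ : IsB (Set.univ : Set (ι → G)) :=
  (IsB.eq 0 0).congr (by ext x; simp [eqSet])

lemma isB_empty : IsB (∅ : Set (ι → G)) :=
  isB_univ.compl.congr (by simp)

lemma isB_biInter {κ : Type*} (s : Finset κ) {f : κ → Set (ι → G)} (hf : ∀ q ∈ s, IsB (f q)) :
    IsB (⋂ q ∈ s, f q) := by
  classical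
  induction s using Finset.induction_on with
  | empty => exact isB_univ.congr (by simp)
  | insert _ _ hq ih =>
    rw [Finset.set_biInter_insert]
    exact (hf _ (Finset.mem_insert_self _ _)).inter
      (ih fun q hqs => hf q (Finset.mem_insert_of_mem hqs))

lemma isB_biUnion {κ : Type*} (s : Finset κ) {f : κ → Set (ι → G)} (hf : ∀ q ∈ s, IsB (f q)) :
    IsB (⋃ q ∈ s, f q) := by
  classical
  induction s using Finset.induction_on with
  | empty => exact isB_empty.congr (by simp)
  | insert _ _ hq ih =>
    rw [Finset.set_biUnion_insert]
    exact (hf _ (Finset.mem_insert_self _ _)).union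
      (ih fun q hqs => hf q (Finset.mem_insert_of_mem hqs))

lemma isB_iUnion {κ : Type*} [Fintype κ] {f : κ → Set (ι → G)} (hf : ∀ q, IsB (f q)) :
    IsB (⋃ q, f q) :=
  (isB_biUnion Finset.univ (fun q _ => hf q)).congr (by simp)

/-- preimage of an IsB set under an affine map is IsB -/
lemma IsB.affine_preimage {κ : Type} [Fintype κ] {S : Set (ι → G)} (h : IsB S)
    (c : ι → κ → ℤ) (δ : ι → G) :
    IsB ((fun x : κ → G => fun i => (∑ j, c i j • x j) + δ i) ⁻¹' S) := by
  induction h with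
  | eq e γ =>
    have : ((fun x : κ → G => fun i => (∑ j, c i j • x j) + δ i) ⁻¹' eqSet e γ)
        = eqSet (fun j => ∑ i, e i * c i j) (γ - ∑ i, e i • δ i) := by
      ext x
      simp only [Set.mem_preimage, eqSet, Set.mem_setOf_eq]
      have key : ∑ i, e i • ((∑ j, c i j • x j) + δ i)
          = (∑ j, (∑ i, e i * c i j) • x j) + ∑ i, e i • δ i := by
        rw [Finset.sum_congr rfl (fun i _ => smul_add (e i) _ (δ i)), Finset.sum_add_distrib]
        congr 1
        calc ∑ i, e i • ∑ j, c i j • x j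
            = ∑ i, ∑ j, (e i * c i j) • x j := by
              refine Finset.sum_congr rfl fun i _ => ?_
              rw [Finset.smul_sum]
              exact Finset.sum_congr rfl fun j _ => smul_smul _ _ _
          _ = ∑ j, ∑ i, (e i * c i j) • x j := Finset.sum_comm
          _ = ∑ j, (∑ i, e i * c i j) • x j := by
              exact Finset.sum_congr rfl fun j _ => (Finset.sum_smul).symm
      rw [key]
      constructor
      · intro h; rw [eq_sub_iff_add_eq]; exact h
      · intro h; rw [eq_sub_iff_add_eq] at h; exact h
    exact (IsB.eq _ _).congr this.symm
  | compl hs ih => exact ih.compl.congr (by rw [Set.preimage_compl])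
  | inter hs ht ihs iht => exact (ihs.inter iht).congr (by rw [Set.preimage_inter])

/-- preimage under coordinate re-selection -/
lemma IsB.reindex {κ : Type} [Fintype κ] {S : Set (ι → G)} (h : IsB S) (σ : ι → κ) :
    IsB ((fun x : κ → G => x ∘ σ) ⁻¹' S) := by
  classical
  have h2 := h.affine_preimage (fun i j => if σ i = j then 1 else 0) 0
  have hfun : (fun x : κ → G => fun i => (∑ j, (if σ i = j then (1:ℤ) else 0) • x j) + (0 : ι → G) i)
      = (fun x : κ → G => x ∘ σ) := by
    funext x i
    simp [ite_smul, Finset.sum_ite_eq]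
  rw [hfun] at h2
  exact h2

end IsBsec

section Core

variable {κ : Type} [Fintype κ]

/-- full pp lemma : solvability of a system of equations is equation-definable -/
lemma isB_pp (m : κ → ℤ) (q₀ : κ) (h0 : m q₀ ≠ 0) :
    IsB {t : κ → G | ∃ y, ∀ i, m i • y = t i} := by
  classical
  let ψ : (κ → ℤ) →ₗ[ℤ] ℤ :=
    { toFun := fun c => ∑ i, c i * m i
      map_add' := by intro a b; simp [add_mul, Finset.sum_add_distrib]
      map_smul' := by intro z a; simp [Finset.mul_sum, mul_assoc] }
  obtain ⟨Sgen, hSgen⟩ := IsNoetherian.noetherian (LinearMap.ker ψ)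
  have hψapp : ∀ c : κ → ℤ, ψ c = ∑ i, c i * m i := fun _ => rfl
  have hψone : ∀ i, ψ (Pi.single i 1) = m i := by
    intro i
    rw [hψapp]
    simp [Pi.single_apply, ite_mul, Finset.sum_ite_eq']
  have key : {t : κ → G | ∃ y, ∀ i, m i • y = t i} = ⋂ c ∈ Sgen, eqSet c 0 := by
    ext t
    simp only [Set.mem_setOf_eq, Set.mem_iInter, eqSet]
    constructor
    · rintro ⟨y, hy⟩ c hc
      have hcker : c ∈ LinearMap.ker ψ := by
        rw [← hSgen]; exact Submodule.subset_span hc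
      have : ∑ i, c i • t i = ψ c • y := by
        rw [Finset.sum_congr rfl (fun i _ => by rw [← hy i, smul_smul])]
        show _ = (∑ i, c i * m i) • y
        rw [Finset.sum_smul]
      rw [this, LinearMap.mem_ker.1 hcker, zero_smul]
    · intro hT
      let φ : (κ → ℤ) →ₗ[ℤ] G :=
        { toFun := fun c => ∑ i, c i • t i
          map_add' := by intro a b; simp [add_smul, Finset.sum_add_distrib]
          map_smul' := by
            intro z a
            simp only [Pi.smul_apply, smul_eq_mul, RingHom.id_apply]
            rw [Finset.smul_sum]
            exact Finset.sum_congr rfl fun i _ => (mul_smul z (a i) (t i)) }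
      have hφapp : ∀ c : κ → ℤ, φ c = ∑ i, c i • t i := fun _ => rfl
      have hker : LinearMap.ker ψ ≤ LinearMap.ker φ := by
        rw [← hSgen, Submodule.span_le]
        intro c hc
        exact LinearMap.mem_ker.2 (hT c hc)
      set R := LinearMap.range ψ with hR
      set d := Submodule.IsPrincipal.generator R with hd
      have hdspan : Submodule.span ℤ {d} = R := Submodule.IsPrincipal.span_singleton_generator R
      have hmem : ∀ i, m i ∈ R := fun i => ⟨Pi.single i 1, hψone i⟩
      have hdne : d ≠ 0 := by
        intro hd0
        have := hmem q₀
        rw [← hdspan, hd0, Submodule.span_zero_singleton] at this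
        exact h0 (by simpa using this)
      obtain ⟨e, he⟩ : ∃ e, ψ e = d := Submodule.IsPrincipal.generator_mem R
      obtain ⟨y, hy⟩ := divisible d hdne (φ e)
      refine ⟨y, fun i => ?_⟩
      obtain ⟨u, hu⟩ := Submodule.mem_span_singleton.1 (hdspan ▸ hmem i)
      have hu' : u * d = m i := by rw [← hu]; simp
      have h3 : φ (u • e) = φ (Pi.single i 1) := by
        have hsub : (u • e - Pi.single i 1) ∈ LinearMap.ker ψ := by
          rw [LinearMap.mem_ker, map_sub, map_smul, he, hψone, smul_eq_mul, hu', sub_self]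
        have := LinearMap.mem_ker.1 (hker hsub)
        rw [map_sub] at this
        exact sub_eq_zero.1 this
      have h2 : φ (Pi.single i 1) = t i := by
        rw [hφapp]
        simp [Pi.single_apply, ite_smul, Finset.sum_ite_eq']
      calc m i • y = (u * d) • y := by rw [hu']
        _ = u • (d • y) := by rw [mul_smul]
        _ = u • φ e := by rw [hy]
        _ = φ (u • e) := (map_smul φ u e).symm
        _ = t i := by rw [h3, h2]
  rw [key]
  exact isB_biInter Sgen fun c _ => IsB.eq c 0

/-- solutions of a subsystem -/
def sols (s : Finset κ) (m : κ → ℤ) (t : κ → G) : Set G := {y | ∀ q ∈ s, m q • y = t q}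

lemma isB_cons (m : κ → ℤ) (s : Finset κ) (q₀ : κ) (hq₀ : q₀ ∈ s) (h0 : m q₀ ≠ 0) :
    IsB {t : κ → G | (sols s m t).Nonempty} := by
  classical
  have h1 := isB_pp (κ := {q // q ∈ s}) (fun q => m q) ⟨q₀, hq₀⟩ h0
  have h2 := h1.reindex (Subtype.val : {q // q ∈ s} → κ)
  refine h2.congr ?_
  ext t
  simp only [Set.mem_preimage, Set.mem_setOf_eq, sols, Set.Nonempty, Function.comp]
  constructor
  · rintro ⟨y, hy⟩
    exact ⟨y, fun q hq => hy ⟨q, hq⟩⟩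
  · rintro ⟨y, hy⟩
    exact ⟨y, fun q => hy q q.2⟩

lemma sols_finite {s : Finset κ} {m : κ → ℤ} {q₀ : κ} (hq₀ : q₀ ∈ s) (h0 : m q₀ ≠ 0)
    (t : κ → G) : (sols s m t).Finite :=
  Set.Finite.subset (eqset_finite (m q₀) h0 (t q₀)) (fun y hy => hy q₀ hq₀)

lemma sols_ncard {s : Finset κ} {m : κ → ℤ} {t : κ → G} {y₀ : G} (hy₀ : y₀ ∈ sols s m t) :
    (sols s m t).ncard = (sols s m (0 : κ → G)).ncard := by
  have hcoset : sols s m t = (y₀ + ·) '' sols s m (0 : κ → G) := by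
    ext y
    constructor
    · intro hy
      refine ⟨y - y₀, fun q hq => ?_, add_sub_cancel y₀ y⟩
      rw [smul_sub, hy q hq, hy₀ q hq, sub_self]; rfl
    · rintro ⟨z, hz, rfl⟩ q hq
      rw [smul_add, hy₀ q hq, hz q hq]
      simp
  rw [hcoset, Set.ncard_image_of_injective _ (add_right_injective y₀)]

/-- inclusion-exclusion -/
lemma incl_excl {J : Type} [DecidableEq J] (N : Finset J) (F : J → Set G) :
    ∀ (E : Set G), E.Finite →
    ((E ∩ ⋂ j ∈ N, (F j)ᶜ).ncard : ℤ)
      = ∑ T ∈ N.powerset, (-1) ^ T.card * ((E ∩ ⋂ j ∈ T, F j).ncard : ℤ) := by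
  induction N using Finset.induction_on with
  | empty => intro E hE; simp
  | @insert a N ha ih =>
    intro E hE
    rw [Finset.sum_powerset_insert ha]
    have step2 : ∑ T ∈ N.powerset, (-1:ℤ) ^ (insert a T).card * ((E ∩ ⋂ j ∈ insert a T, F j).ncard : ℤ)
        = -∑ T ∈ N.powerset, (-1:ℤ) ^ T.card * (((E ∩ F a) ∩ ⋂ j ∈ T, F j).ncard : ℤ) := by
      rw [← Finset.sum_neg_distrib]
      refine Finset.sum_congr rfl fun T hT => ?_
      have haT : a ∉ T := fun h => ha (Finset.mem_powerset.1 hT h)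
      rw [Finset.card_insert_of_notMem haT, Finset.set_biInter_insert, pow_succ]
      have : E ∩ (F a ∩ ⋂ j ∈ T, F j) = (E ∩ F a) ∩ ⋂ j ∈ T, F j := by
        rw [Set.inter_assoc]
      rw [this]
      ring
    rw [step2, ← ih E hE, ← ih (E ∩ F a) (hE.subset Set.inter_subset_left)]
    have hXeq : E ∩ ⋂ j ∈ insert a N, (F j)ᶜ = (E ∩ ⋂ j ∈ N, (F j)ᶜ) \ F a := by
      rw [Finset.set_biInter_insert]
      ext y
      simp only [Set.mem_inter_iff, Set.mem_diff, Set.mem_compl_iff, Set.mem_iInter]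
      tauto
    have hYeq : (E ∩ F a) ∩ ⋂ j ∈ N, (F j)ᶜ = (E ∩ ⋂ j ∈ N, (F j)ᶜ) ∩ F a := by
      ext y
      simp only [Set.mem_inter_iff, Set.mem_iInter]
      tauto
    rw [hXeq, hYeq]
    have hXfin : (E ∩ ⋂ j ∈ N, (F j)ᶜ).Finite := hE.subset Set.inter_subset_left
    have := Set.ncard_inter_add_ncard_diff_eq_ncard (E ∩ ⋂ j ∈ N, (F j)ᶜ) (F a) hXfin
    omega

/-- the core definable set -/
def coreSet (m : κ → ℤ) (b : κ → Bool) : Set (κ → G) :=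
  {t | ∃ y : G, ∀ q, (m q • y = t q ↔ b q = true)}

lemma isB_coreSet (m : κ → ℤ) (b : κ → Bool) : IsB (coreSet m b) := by
  classical
  set P : Finset κ := Finset.univ.filter (fun q => b q = true) with hPdef
  set N : Finset κ := Finset.univ.filter (fun q => b q = false ∧ m q ≠ 0) with hNdef
  set Z : Finset κ := Finset.univ.filter (fun q => b q = false ∧ m q = 0) with hZdef
  have hPmem : ∀ q, q ∈ P ↔ b q = true := by intro q; simp [hPdef]
  have hNmem : ∀ q, q ∈ N ↔ (b q = false ∧ m q ≠ 0) := by intro q; simp [hNdef]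
  have hZmem : ∀ q, q ∈ Z ↔ (b q = false ∧ m q = 0) := by intro q; simp [hZdef]
  have hdecomp : coreSet m b
      = (⋂ q ∈ Z, (eqSet (fun j => if j = q then 1 else 0) (0:G))ᶜ)
        ∩ {t | ∃ y, y ∈ sols P m t ∧ ∀ q ∈ N, m q • y ≠ t q} := by
    have heqZ : ∀ (q : κ) (t : κ → G), t ∈ eqSet (fun j => if j = q then (1:ℤ) else 0) (0:G) ↔ t q = 0 := by
      intro q t
      simp [eqSet, ite_smul, Finset.sum_ite_eq']
    ext t
    simp only [coreSet, Set.mem_setOf_eq, Set.mem_inter_iff, Set.mem_iInter, Set.mem_compl_iff]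
    constructor
    · rintro ⟨y, hy⟩
      refine ⟨fun q hq => ?_, y, fun q hq => ?_, fun q hq heq => ?_⟩
      · obtain ⟨hbq, hmq⟩ := (hZmem q).1 hq
        rw [heqZ]
        intro ht0
        have := (hy q).1 (by rw [hmq, zero_smul, ht0])
        rw [hbq] at this; exact Bool.false_ne_true this
      · exact (hy q).2 ((hPmem q).1 hq)
      · obtain ⟨hbq, _⟩ := (hNmem q).1 hq
        have := (hy q).1 heq
        rw [hbq] at this; exact Bool.false_ne_true this
    · rintro ⟨hZ0, y, hyP, hyN⟩
      refine ⟨y, fun q => ?_⟩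
      rcases Bool.eq_false_or_eq_true (b q) with hbq | hbq
      · exact ⟨fun _ => hbq, fun _ => hyP q ((hPmem q).2 hbq)⟩
      · rcases eq_or_ne (m q) 0 with hmq | hmq
        · have ht0 := hZ0 q ((hZmem q).2 ⟨hbq, hmq⟩)
          rw [heqZ] at ht0
          constructor
          · intro h; exact absurd (show t q = 0 by rw [← h, hmq, zero_smul]) ht0
          · intro h; rw [hbq] at h; exact absurd h Bool.false_ne_true
        · constructor
          · intro h; exact absurd h (hyN q ((hNmem q).2 ⟨hbq, hmq⟩))
          · intro h; rw [hbq] at h; exact absurd h Bool.false_ne_true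
  rw [hdecomp]
  refine IsB.inter (isB_biInter Z fun q _ => (IsB.eq _ _).compl) ?_
  by_cases hcase : ∃ q₀ ∈ P, m q₀ ≠ 0
  · -- case with genuine equations: counting argument
    obtain ⟨q₀, hq₀P, hq₀⟩ := hcase
    set g : Finset κ → ℕ := fun T => (sols (P ∪ T) m (0 : κ → G)).ncard with hgdef
    set cons : Finset κ → Set (κ → G) := fun T => {t | (sols (P ∪ T) m t).Nonempty} with hconsdef
    have hconsB : ∀ T, IsB (cons T) := fun T =>
      isB_cons m (P ∪ T) q₀ (Finset.mem_union_left _ hq₀P) hq₀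
    have hcount : ∀ t : κ → G,
        (({y | y ∈ sols P m t ∧ ∀ q ∈ N, m q • y ≠ t q}).ncard : ℤ)
        = ∑ T ∈ N.powerset, (-1)^T.card * (if t ∈ cons T then (g T : ℤ) else 0) := by
      intro t
      have hE : (sols P m t).Finite := sols_finite hq₀P hq₀ t
      have hie := incl_excl N (fun q => {y | m q • y = t q}) (sols P m t) hE
      have hL : {y | y ∈ sols P m t ∧ ∀ q ∈ N, m q • y ≠ t q}
          = sols P m t ∩ ⋂ q ∈ N, {y | m q • y = t q}ᶜ := by
        ext y
        simp only [Set.mem_setOf_eq, Set.mem_inter_iff, Set.mem_iInter, Set.mem_compl_iff]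
      rw [hL, hie]
      refine Finset.sum_congr rfl fun T hT => ?_
      congr 1
      have hsols : sols P m t ∩ ⋂ q ∈ T, {y | m q • y = t q} = sols (P ∪ T) m t := by
        ext y
        simp only [Set.mem_inter_iff, Set.mem_iInter, Set.mem_setOf_eq, sols, Finset.mem_union]
        constructor
        · rintro ⟨h1, h2⟩ q hq; rcases hq with hq | hq; exacts [h1 q hq, h2 q hq]
        · intro h; exact ⟨fun q hq => h q (Or.inl hq), fun q hq => h q (Or.inr hq)⟩
      rw [hsols]
      by_cases hne : t ∈ cons T
      · rw [if_pos hne]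
        obtain ⟨y₀, hy₀⟩ := hne
        rw [sols_ncard hy₀]
      · rw [if_neg hne]
        have : sols (P ∪ T) m t = ∅ := Set.not_nonempty_iff_eq_empty.1 hne
        rw [this, Set.ncard_empty]
        rfl
    set Good : Finset (Finset κ) → Prop := fun p =>
      0 < ∑ T ∈ N.powerset, (-1:ℤ)^T.card * (if T ∈ p then (g T : ℤ) else 0) with hGooddef
    have hfinal : {t : κ → G | ∃ y, y ∈ sols P m t ∧ ∀ q ∈ N, m q • y ≠ t q}
        = ⋃ p ∈ N.powerset.powerset,
            (if Good p then (⋂ T ∈ N.powerset, (if T ∈ p then cons T else (cons T)ᶜ)) else ∅) := by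
      ext t
      have havoid_fin : ({y | y ∈ sols P m t ∧ ∀ q ∈ N, m q • y ≠ t q}).Finite :=
        (sols_finite hq₀P hq₀ t).subset (fun y hy => hy.1)
      have hmain : (∃ y, y ∈ sols P m t ∧ ∀ q ∈ N, m q • y ≠ t q)
          ↔ 0 < ∑ T ∈ N.powerset, (-1:ℤ)^T.card * (if t ∈ cons T then (g T : ℤ) else 0) := by
        rw [← hcount t]
        rw [Int.natCast_pos, Set.ncard_pos havoid_fin]
        rfl
      simp only [Set.mem_setOf_eq, Set.mem_iUnion]
      constructor
      · intro hex
        refine ⟨N.powerset.filter (fun T => t ∈ cons T), Finset.mem_powerset.2 (Finset.filter_subset _ _), ?_⟩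
        have hiff : ∀ T ∈ N.powerset, ((if T ∈ N.powerset.filter (fun T => t ∈ cons T) then (g T : ℤ) else 0)
              = (if t ∈ cons T then (g T : ℤ) else 0)) := by
          intro T hT
          by_cases h : t ∈ cons T
          · rw [if_pos h, if_pos (Finset.mem_filter.2 ⟨hT, h⟩)]
          · have hTn : T ∉ N.powerset.filter (fun T => t ∈ cons T) :=
              fun hc => h (Finset.mem_filter.1 hc).2
            rw [if_neg h, if_neg hTn]
        have hGood : Good (N.powerset.filter (fun T => t ∈ cons T)) := by
          show 0 < ∑ T ∈ N.powerset, (-1:ℤ)^T.card *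
            (if T ∈ N.powerset.filter (fun T => t ∈ cons T) then (g T : ℤ) else 0)
          rw [Finset.sum_congr rfl (fun T hT => by rw [hiff T hT])]
          exact hmain.1 hex
        rw [if_pos hGood]
        simp only [Set.mem_iInter]
        intro T hT
        by_cases h : t ∈ cons T
        · rw [if_pos (Finset.mem_filter.2 ⟨hT, h⟩)]; exact h
        · have hTn : T ∉ N.powerset.filter (fun T => t ∈ cons T) :=
            fun hc => h (Finset.mem_filter.1 hc).2
          rw [if_neg hTn]; exact h
      · rintro ⟨p, hp, hmem⟩
        by_cases hGood : Good p
        · rw [if_pos hGood] at hmem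
          simp only [Set.mem_iInter] at hmem
          rw [hmain]
          have hiff : ∀ T ∈ N.powerset, ((if t ∈ cons T then (g T : ℤ) else 0) = (if T ∈ p then (g T : ℤ) else 0)) := by
            intro T hT
            have hm := hmem T hT
            by_cases h : T ∈ p
            · rw [if_pos h] at hm; rw [if_pos h, if_pos hm]
            · rw [if_neg h] at hm; rw [if_neg h, if_neg hm]
          rw [Finset.sum_congr rfl (fun T hT => by rw [hiff T hT])]
          exact hGood
        · rw [if_neg hGood] at hmem
          exact absurd hmem (Set.notMem_empty t)
    rw [hfinal]
    refine isB_biUnion _ fun p _ => ?_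
    by_cases hGood : Good p
    · rw [if_pos hGood]
      refine isB_biInter _ fun T _ => ?_
      by_cases h : T ∈ p
      · rw [if_pos h]; exact hconsB T
      · rw [if_neg h]; exact (hconsB T).compl
    · rw [if_neg hGood]; exact isB_empty
  · -- no genuine equations: the existential is essentially vacuous
    push_neg at hcase
    have heq : {t : κ → G | ∃ y, y ∈ sols P m t ∧ ∀ q ∈ N, m q • y ≠ t q}
        = ⋂ q ∈ P, eqSet (fun j => if j = q then 1 else 0) (0:G) := by
      have heqP : ∀ (q : κ) (t : κ → G), t ∈ eqSet (fun j => if j = q then (1:ℤ) else 0) (0:G) ↔ t q = 0 := by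
        intro q t
        simp [eqSet, ite_smul, Finset.sum_ite_eq']
      ext t
      simp only [Set.mem_setOf_eq, Set.mem_iInter]
      constructor
      · rintro ⟨y, hyP, _⟩ q hq
        rw [heqP]
        have := hyP q hq
        rw [hcase q hq, zero_smul] at this
        exact this.symm
      · intro hP
        have hbad : (⋃ q ∈ N, {y : G | m q • y = t q}).Finite := by
          refine Set.Finite.biUnion N.finite_toSet fun q hq => ?_
          exact eqset_finite (m q) ((hNmem q).1 (by exact_mod_cast hq)).2 (t q)
        obtain ⟨y, hy⟩ := hbad.infinite_compl.nonempty
        simp only [Set.mem_compl_iff, Set.mem_iUnion, Set.mem_setOf_eq, not_exists] at hy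
        refine ⟨y, fun q hq => ?_, fun q hq => hy q hq⟩
        rw [hcase q hq, zero_smul]
        have := hP q hq
        rw [heqP] at this
        exact this.symm
    rw [heq]
    exact isB_biInter P fun q _ => IsB.eq _ _

end Core

section Proj

lemma IsB.rep {ι : Type} [Fintype ι] {S : Set (ι → G)} (h : IsB S) :
    ∃ (κ : Type) (_ : Fintype κ) (c : κ → ι → ℤ) (γ : κ → G) (Φ : Set (κ → Prop)),
      S = {x | (fun q => ∑ i, c q i • x i = γ q) ∈ Φ} := by
  induction h with
  | eq c γ =>
    refine ⟨PUnit, inferInstance, fun _ => c, fun _ => γ, {b | b PUnit.unit}, ?_⟩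
    ext x
    simp [eqSet, Set.mem_setOf_eq]
  | compl hs ih =>
    obtain ⟨κ, hκ, c, γ, Φ, rfl⟩ := ih
    exact ⟨κ, hκ, c, γ, Φᶜ, rfl⟩
  | inter hs ht ihs iht =>
    obtain ⟨κ₁, hκ₁, c₁, γ₁, Φ₁, rfl⟩ := ihs
    obtain ⟨κ₂, hκ₂, c₂, γ₂, Φ₂, rfl⟩ := iht
    refine ⟨κ₁ ⊕ κ₂, @instFintypeSum κ₁ κ₂ hκ₁ hκ₂, Sum.elim c₁ c₂, Sum.elim γ₁ γ₂,
      {b | (fun q => b (Sum.inl q)) ∈ Φ₁ ∧ (fun q => b (Sum.inr q)) ∈ Φ₂}, ?_⟩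
    ext x
    simp only [Set.mem_inter_iff, Set.mem_setOf_eq]
    rfl

lemma IsB.proj {ι : Type} [Fintype ι] {S : Set ((ι ⊕ Unit) → G)} (h : IsB S) :
    IsB {x : ι → G | ∃ y, Sum.elim x (fun _ => y) ∈ S} := by
  classical
  obtain ⟨κ, hκ, c, γ, Φ, rfl⟩ := h.rep
  set m : κ → ℤ := fun q => c q (Sum.inr ()) with hm
  set c' : κ → ι → ℤ := fun q i => c q (Sum.inl i) with hc'
  have hsplit : ∀ (q : κ) (x : ι → G) (y : G),
      (∑ j, c q j • Sum.elim x (fun _ => y) j) = (∑ i, c' q i • x i) + m q • y := by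
    intro q x y
    rw [Fintype.sum_sum_type]
    simp
    rfl
  have harith : ∀ (q : κ) (x : ι → G) (y : G),
      ((∑ j, c q j • Sum.elim x (fun _ => y) j = γ q) ↔
        (m q • y = (∑ i, (-(c' q i)) • x i) + γ q)) := by
    intro q x y
    rw [hsplit]
    have h1 : (∑ i, (-(c' q i)) • x i) = -(∑ i, c' q i • x i) := by
      rw [← Finset.sum_neg_distrib]
      exact Finset.sum_congr rfl fun i _ => neg_smul _ _
    rw [h1]
    constructor
    · intro h; rw [← h]; abel
    · intro h; rw [h]; abel
  have key : {x : ι → G | ∃ y, Sum.elim x (fun _ => y) ∈ {z | (fun q => ∑ j, c q j • z j = γ q) ∈ Φ}}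
      = ⋃ b : κ → Bool, (if (fun q => b q = true) ∈ Φ then
          ((fun x : ι → G => fun q => (∑ i, (-(c' q i)) • x i) + γ q) ⁻¹' coreSet m b) else ∅) := by
    ext x
    simp only [Set.mem_setOf_eq, Set.mem_iUnion]
    constructor
    · rintro ⟨y, hy⟩
      refine ⟨fun q => decide ((∑ j, c q j • Sum.elim x (fun _ => y) j) = γ q), ?_⟩
      have hpat : (fun q => (decide ((∑ j, c q j • Sum.elim x (fun _ => y) j) = γ q)) = true)
          = (fun q => ∑ j, c q j • Sum.elim x (fun _ => y) j = γ q) := by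
        funext q
        exact propext (by simp)
      rw [if_pos (by rw [hpat]; exact hy)]
      refine ⟨y, fun q => ?_⟩
      rw [decide_eq_true_iff]
      exact ((harith q x y).symm)
    · rintro ⟨b, hb⟩
      by_cases hΦ : (fun q => b q = true) ∈ Φ
      · rw [if_pos hΦ] at hb
        obtain ⟨y, hy⟩ := hb
        refine ⟨y, ?_⟩
        have : (fun q => ∑ j, c q j • Sum.elim x (fun _ => y) j = γ q) = (fun q => b q = true) := by
          funext q
          exact propext ((harith q x y).trans (hy q))
        rw [this]
        exact hΦ
      · rw [if_neg hΦ] at hb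
        exact absurd hb (Set.notMem_empty x)
  rw [key]
  refine isB_iUnion fun b => ?_
  by_cases hΦ : (fun q => b q = true) ∈ Φ
  · rw [if_pos hΦ]
    exact (isB_coreSet m b).affine_preimage _ _
  · rw [if_neg hΦ]
    exact isB_empty

end Proj

section Formulas

lemma term_affine {ι : Type} [Fintype ι] (t : (abLang[[(Set.univ : Set QModZ)]]).Term ι) :
    ∃ (c : ι → ℤ) (δ : G), ∀ v : ι → G, t.realize v = (∑ i, c i • v i) + δ := by
  classical
  induction t with
  | var i =>
    refine ⟨fun j => if j = i then 1 else 0, 0, fun v => ?_⟩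
    simp [ite_smul, Finset.sum_ite_eq']
  | @func l f ts ih =>
    rcases f with f | cst
    · cases f with
      | zero =>
        refine ⟨0, 0, fun v => ?_⟩
        show (0 : G) = _
        simp
      | neg =>
        obtain ⟨c, δ, h⟩ := ih 0
        refine ⟨fun i => -(c i), -δ, fun v => ?_⟩
        simp only [Term.realize_func]
        show -((ts 0).realize v) = _
        rw [h]
        rw [neg_add]
        congr 1
        rw [← Finset.sum_neg_distrib]
        exact Finset.sum_congr rfl fun i _ => (neg_smul _ _).symm
      | add =>
        obtain ⟨c₁, δ₁, h₁⟩ := ih 0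
        obtain ⟨c₂, δ₂, h₂⟩ := ih 1
        refine ⟨fun i => c₁ i + c₂ i, δ₁ + δ₂, fun v => ?_⟩
        simp only [Term.realize_func]
        show (ts 0).realize v + (ts 1).realize v = _
        rw [h₁, h₂, add_add_add_comm]
        congr 1
        rw [← Finset.sum_add_distrib]
        exact Finset.sum_congr rfl fun i _ => (add_smul _ _ _).symm
    · cases l with
      | zero =>
        refine ⟨0, (cst : QModZ), fun v => ?_⟩
        show ((cst : QModZ)) = _
        simp
      | succ n => exact cst.elim

lemma formula_isB {n k : ℕ} (φ : (abLang[[(Set.univ : Set QModZ)]]).BoundedFormula (Fin n) k) :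
    IsB {z : Fin n ⊕ Fin k → G | φ.Realize (z ∘ Sum.inl) (z ∘ Sum.inr)} := by
  classical
  induction φ with
  | falsum =>
    exact isB_empty.congr (by ext z; simp [BoundedFormula.Realize])
  | @equal k t₁ t₂ =>
    obtain ⟨c₁, δ₁, h₁⟩ := term_affine t₁
    obtain ⟨c₂, δ₂, h₂⟩ := term_affine t₂
    have : {z : Fin n ⊕ Fin k → G | (BoundedFormula.equal t₁ t₂).Realize (z ∘ Sum.inl) (z ∘ Sum.inr)}
        = eqSet (fun i => c₁ i - c₂ i) (δ₂ - δ₁) := by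
      ext z
      have helim : Sum.elim (z ∘ Sum.inl) (z ∘ Sum.inr) = z := by
        funext i; cases i <;> rfl
      simp only [Set.mem_setOf_eq, BoundedFormula.Realize, eqSet, helim, h₁, h₂]
      rw [Finset.sum_congr rfl (fun (i : Fin n ⊕ Fin k) (_ : i ∈ Finset.univ) => sub_smul (c₁ i) (c₂ i) (z i)),
        Finset.sum_sub_distrib]
      rw [sub_eq_sub_iff_add_eq_add, add_comm δ₂]
    exact (IsB.eq _ _).congr this.symm
  | @rel k l R ts => rcases R with R | R <;> exact R.elim
  | @imp k φ ψ ihφ ihψ =>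
    refine (ihφ.compl.union ihψ).congr ?_
    ext z
    simp [BoundedFormula.realize_imp, imp_iff_not_or]
  | @all k φ ih =>
    -- reindex ih from (Fin n ⊕ Fin (k+1)) to ((Fin n ⊕ Fin k) ⊕ Unit)
    set σ : Fin n ⊕ Fin (k+1) → (Fin n ⊕ Fin k) ⊕ Unit :=
      Sum.elim (fun i => Sum.inl (Sum.inl i))
        (fun j => Fin.lastCases (Sum.inr ()) (fun j' => Sum.inl (Sum.inr j')) j) with hσ
    have hT' := ih.reindex σ
    have hproj := hT'.compl.proj
    refine hproj.compl.congr ?_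
    ext z
    simp only [Set.mem_compl_iff, Set.mem_setOf_eq, Set.mem_preimage,
      BoundedFormula.realize_all, not_exists, not_not]
    have h2 : ∀ a : G, ((Sum.elim z (fun _ => a)) ∘ σ) ∘ Sum.inr = Fin.snoc (z ∘ Sum.inr) a := by
      intro a
      funext j
      refine Fin.lastCases ?_ (fun j' => ?_) j
      · show (Sum.elim z (fun _ => a)) (σ (Sum.inr (Fin.last k))) = _
        rw [hσ]
        simp [Fin.snoc_last]
      · show (Sum.elim z (fun _ => a)) (σ (Sum.inr (Fin.castSucc j'))) = _
        rw [hσ]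
        simp [Fin.snoc_castSucc]
    constructor
    · intro h a
      have hr := h a
      rw [h2 a] at hr
      exact hr
    · intro h a
      have hr := h a
      rw [← h2 a] at hr
      exact hr

lemma definable_isB {n : ℕ} {X : Set (Fin n → G)}
    (h : Set.Definable (Set.univ : Set QModZ) abLang X) : IsB X := by
  obtain ⟨φ, rfl⟩ := h
  have hB := (formula_isB (k := 0) φ).reindex
    (Sum.elim id (Fin.elim0) : Fin n ⊕ Fin 0 → Fin n)
  refine hB.congr ?_
  ext v
  simp only [Set.mem_preimage, Set.mem_setOf_eq]
  have h1 : (v ∘ Sum.elim id (Fin.elim0)) ∘ Sum.inl = v := by funext i; rfl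
  show BoundedFormula.Realize φ _ _ ↔ _
  rw [h1]
  unfold Formula.Realize
  exact iff_of_eq (congrArg (BoundedFormula.Realize φ v) (Subsingleton.elim _ _))

end Formulas

section QSide

/-- term constructors on the ℚ side -/
def zeroT {α : Type} : (abLang[[(Set.univ : Set ℚ)]]).Term α :=
  Term.func (Sum.inl abFunc.zero) (fun i => i.elim0)

def addT {α : Type} (t₁ t₂ : (abLang[[(Set.univ : Set ℚ)]]).Term α) :
    (abLang[[(Set.univ : Set ℚ)]]).Term α :=
  Term.func (Sum.inl abFunc.add) ![t₁, t₂]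

def negT {α : Type} (t : (abLang[[(Set.univ : Set ℚ)]]).Term α) :
    (abLang[[(Set.univ : Set ℚ)]]).Term α :=
  Term.func (Sum.inl abFunc.neg) ![t]

lemma realize_zeroT {α : Type} (v : α → ℚ) : (zeroT (α := α)).realize v = 0 := rfl

lemma realize_addT {α : Type} (t₁ t₂ : (abLang[[(Set.univ : Set ℚ)]]).Term α) (v : α → ℚ) :
    (addT t₁ t₂).realize v = t₁.realize v + t₂.realize v := rfl

lemma realize_negT {α : Type} (t : (abLang[[(Set.univ : Set ℚ)]]).Term α) (v : α → ℚ) :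
    (negT t).realize v = -(t.realize v) := rfl

def nsmulT {α : Type} (t : (abLang[[(Set.univ : Set ℚ)]]).Term α) : ℕ → (abLang[[(Set.univ : Set ℚ)]]).Term α
  | 0 => zeroT
  | n+1 => addT (nsmulT t n) t

lemma realize_nsmulT {α : Type} (t : (abLang[[(Set.univ : Set ℚ)]]).Term α) (v : α → ℚ) :
    ∀ n : ℕ, (nsmulT t n).realize v = (n : ℤ) • (t.realize v)
  | 0 => by simp [nsmulT, realize_zeroT]
  | n+1 => by
    rw [nsmulT, realize_addT, realize_nsmulT t v n]
    push_cast
    rw [add_smul, one_smul]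

def zsmulT {α : Type} (z : ℤ) (t : (abLang[[(Set.univ : Set ℚ)]]).Term α) :
    (abLang[[(Set.univ : Set ℚ)]]).Term α :=
  match z with
  | .ofNat n => nsmulT t n
  | .negSucc n => negT (nsmulT t (n+1))

lemma realize_zsmulT {α : Type} (z : ℤ) (t : (abLang[[(Set.univ : Set ℚ)]]).Term α) (v : α → ℚ) :
    (zsmulT z t).realize v = z • (t.realize v) := by
  cases z with
  | ofNat n => rw [zsmulT, realize_nsmulT]; rfl
  | negSucc n =>
    rw [zsmulT, realize_negT, realize_nsmulT, ← neg_smul]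
    simp [Int.negSucc_eq]

def sumT {α : Type} : (k : ℕ) → (Fin k → (abLang[[(Set.univ : Set ℚ)]]).Term α) →
    (abLang[[(Set.univ : Set ℚ)]]).Term α
  | 0, _ => zeroT
  | k+1, f => addT (sumT k (fun i => f i.castSucc)) (f (Fin.last k))

lemma realize_sumT {α : Type} (v : α → ℚ) :
    ∀ (k : ℕ) (f : Fin k → (abLang[[(Set.univ : Set ℚ)]]).Term α),
      (sumT k f).realize v = ∑ i, (f i).realize v
  | 0, f => by simp [sumT, realize_zeroT]
  | k+1, f => by
    rw [sumT, realize_addT, realize_sumT v k, Fin.sum_univ_castSucc]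

lemma definable_linear {n : ℕ} (c : Fin n → ℤ) (q : ℚ) :
    Set.Definable (Set.univ : Set ℚ) abLang {a : Fin n → ℚ | ∑ i, c i • a i = q} := by
  refine ⟨Term.equal (sumT n (fun i => zsmulT (c i) (Term.var i)))
    ((abLang.con (⟨q, trivial⟩ : (Set.univ : Set ℚ))).term), Set.ext fun a => ?_⟩
  simp only [Set.mem_setOf_eq, Formula.realize_equal, realize_sumT, realize_zsmulT,
    Term.realize_var, Term.realize_con]

lemma π_mk (r : ℚ) : π r = QuotientAddGroup.mk r := rfl

lemma isB_trace (τ : QModZ → ℚ)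
    (hτ : ∀ x : QModZ, τ x ∈ Set.Ico (0 : ℚ) 1 ∧ QuotientAddGroup.mk (τ x) = x)
    {n : ℕ} {X : Set (Fin n → QModZ)} (h : IsB X) :
    ∃ Y : Set (Fin n → ℚ), Set.Definable (Set.univ : Set ℚ) abLang Y ∧
      ∀ a : Fin n → QModZ, a ∈ X ↔ (τ ∘ a) ∈ Y := by
  have hπτ : ∀ x : QModZ, π (τ x) = x := fun x => by rw [π_mk]; exact (hτ x).2
  induction h with
  | eq c γ =>
    classical
    set K : ℤ := 1 + ∑ i, |c i| with hK
    refine ⟨⋃ k ∈ Finset.Icc (-K) K, {a : Fin n → ℚ | ∑ i, c i • a i = τ γ + (k:ℚ)}, ?_, ?_⟩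
    · exact Set.definable_biUnion_finset
        (f := fun k : ℤ => {a : Fin n → ℚ | ∑ i, c i • a i = τ γ + (k:ℚ)})
        (fun k => definable_linear c (τ γ + (k:ℚ))) (Finset.Icc (-K) K)
    · intro a
      have hπsum : π (∑ i, c i • τ (a i)) = ∑ i, c i • a i := by
        rw [map_sum]
        exact Finset.sum_congr rfl fun i _ => by rw [map_zsmul, hπτ]
      simp only [eqSet, Set.mem_setOf_eq, Set.mem_iUnion, Function.comp]
      constructor
      · intro hmem
        have hz : π (∑ i, c i • τ (a i) - τ γ) = 0 := by
          rw [map_sub, hπsum, hπτ, hmem, sub_self]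
        obtain ⟨k, hk⟩ := (π_eq_zero_iff _).1 hz
        have habs : ∀ i, |c i • τ (a i)| ≤ ((|c i| : ℤ) : ℚ) := by
          intro i
          have h1 := (hτ (a i)).1.1
          have h2 := (hτ (a i)).1.2
          have hτabs : |τ (a i)| ≤ 1 := abs_le.2 ⟨by linarith, by linarith⟩
          rw [zsmul_eq_mul, abs_mul]
          calc |(c i : ℚ)| * |τ (a i)| ≤ |(c i : ℚ)| * 1 :=
                mul_le_mul_of_nonneg_left hτabs (abs_nonneg _)
            _ = |(c i : ℚ)| := mul_one _
            _ = ((|c i| : ℤ) : ℚ) := by push_cast; ring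
        have hsum : |∑ i, c i • τ (a i)| ≤ ∑ i, ((|c i| : ℤ) : ℚ) :=
          (Finset.abs_sum_le_sum_abs _ _).trans (Finset.sum_le_sum fun i _ => habs i)
        have hγ1 := (hτ γ).1.1
        have hγ2 := (hτ γ).1.2
        have hkb : |(k : ℚ)| ≤ (K : ℚ) := by
          rw [hk]
          have htr : |∑ i, c i • τ (a i) - τ γ| ≤ |∑ i, c i • τ (a i)| + |τ γ| := by
            rw [sub_eq_add_neg]
            exact (abs_add_le _ _).trans (by rw [abs_neg])
          have hτγabs : |τ γ| ≤ 1 := abs_le.2 ⟨by linarith, by linarith⟩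
          have : ((K : ℤ) : ℚ) = 1 + ∑ i, ((|c i| : ℤ) : ℚ) := by
            rw [hK]; push_cast; ring
          rw [this]
          linarith
        have hkK : -K ≤ k ∧ k ≤ K := by
          have := abs_le.1 hkb
          constructor
          · exact_mod_cast this.1
          · exact_mod_cast this.2
        refine ⟨k, Finset.mem_Icc.2 hkK, ?_⟩
        linarith [hk]
      · rintro ⟨k, _, heq⟩
        rw [← hπsum, heq, map_add, hπτ, π_int, add_zero]
  | compl hs ih =>
    obtain ⟨Y, hdef, htr⟩ := ih
    exact ⟨Yᶜ, hdef.compl, fun a => not_iff_not.2 (htr a)⟩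
  | inter hs ht ihs iht =>
    obtain ⟨Y₁, hdef₁, htr₁⟩ := ihs
    obtain ⟨Y₂, hdef₂, htr₂⟩ := iht
    exact ⟨Y₁ ∩ Y₂, hdef₁.inter hdef₂, fun a => and_congr (htr₁ a) (htr₂ a)⟩

end QSide

end
end TraceProof

/-- `(ℚ; +)` trace defines `(ℚ/ℤ; +)` via the injection `τ` sending each coset `γ + ℤ` to its
unique representative in `[0,1) ∩ ℚ`: every subset of a finite power of `ℚ/ℤ` definable with
parameters in the abelian group `ℚ/ℤ` is traced along `τ` by a subset definable with parameters
in the abelian group `ℚ`. -/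
theorem rationals_traceDefine_rationals_mod_int
    (τ : QModZ → ℚ)
    (hτ : ∀ x : QModZ, τ x ∈ Set.Ico (0 : ℚ) 1 ∧ QuotientAddGroup.mk (τ x) = x) :
    ∀ (n : ℕ) (X : Set (Fin n → QModZ)), Set.Definable (Set.univ : Set QModZ) abLang X →
      ∃ Y : Set (Fin n → ℚ), Set.Definable (Set.univ : Set ℚ) abLang Y ∧
        ∀ a : Fin n → QModZ, a ∈ X ↔ (τ ∘ a) ∈ Y := by
  intro n X hX
  exact TraceProof.isB_trace τ hτ (TraceProof.definable_isB hX)
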